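/- arXiv:0707.0022 — 4 statements merged into one kernel-verified Lean document; each statement's English description precedes it below -/
import Mathlib

section
/- Under the hypotheses of the previous determinant identity (M symmetric positive definite 2×2, q₁, q₂ unit vectors), the 6×6 block matrix [[M₁₁ I₃, −M₁₂ q̂₁ q̂₁],[−M₁₂ q̂₂ q̂₂, M₂₂ I₃]] is invertible. -/
open Matrix

/-- The hat map: `hat q` is the skew matrix with `(hat q).mulVec v = q ×₃ v`. -/
def hat (q : Fin 3 → ℝ) : Matrix (Fin 3) (Fin 3) ℝ :=
  !![0, -q 2, q 1; q 2, 0, -q 0; -q 1, q 0, 0]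

lemma det3 (a b c d e f g h i : ℝ) :
    Matrix.det !![a, b, c; d, e, f; g, h, i]
    = a * e * i - a * f * h - b * d * i + b * f * g + c * d * h - c * e * g := by
  rw [Matrix.det_fin_three]
  simp

set_option maxHeartbeats 1000000 in
lemma detQQ (d k : ℝ) (q1 q2 : Fin 3 → ℝ) :
    (d • (1 : Matrix (Fin 3) (Fin 3) ℝ) - k • (hat q2 * hat q2 * (hat q1 * hat q1))).det
    = d * (d - k * (q1 ⬝ᵥ q2) ^ 2) * (d - k * ((q1 ⬝ᵥ q1) * (q2 ⬝ᵥ q2))) := by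
  have key : d • (1 : Matrix (Fin 3) (Fin 3) ℝ) - k • (hat q2 * hat q2 * (hat q1 * hat q1)) =
      !![d - k * ((q1 0 * q2 0 + q1 1 * q2 1 + q1 2 * q2 2) * q2 0 * q1 0 - (q1 0 * q1 0 + q1 1 * q1 1 + q1 2 * q1 2) * q2 0 * q2 0 - (q2 0 * q2 0 + q2 1 * q2 1 + q2 2 * q2 2) * q1 0 * q1 0 + (q1 0 * q1 0 + q1 1 * q1 1 + q1 2 * q1 2) * (q2 0 * q2 0 + q2 1 * q2 1 + q2 2 * q2 2)),
      -(k * ((q1 0 * q2 0 + q1 1 * q2 1 + q1 2 * q2 2) * q2 0 * q1 1 - (q1 0 * q1 0 + q1 1 * q1 1 + q1 2 * q1 2) * q2 0 * q2 1 - (q2 0 * q2 0 + q2 1 * q2 1 + q2 2 * q2 2) * q1 0 * q1 1)),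
      -(k * ((q1 0 * q2 0 + q1 1 * q2 1 + q1 2 * q2 2) * q2 0 * q1 2 - (q1 0 * q1 0 + q1 1 * q1 1 + q1 2 * q1 2) * q2 0 * q2 2 - (q2 0 * q2 0 + q2 1 * q2 1 + q2 2 * q2 2) * q1 0 * q1 2));
      -(k * ((q1 0 * q2 0 + q1 1 * q2 1 + q1 2 * q2 2) * q2 1 * q1 0 - (q1 0 * q1 0 + q1 1 * q1 1 + q1 2 * q1 2) * q2 1 * q2 0 - (q2 0 * q2 0 + q2 1 * q2 1 + q2 2 * q2 2) * q1 1 * q1 0)),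
      d - k * ((q1 0 * q2 0 + q1 1 * q2 1 + q1 2 * q2 2) * q2 1 * q1 1 - (q1 0 * q1 0 + q1 1 * q1 1 + q1 2 * q1 2) * q2 1 * q2 1 - (q2 0 * q2 0 + q2 1 * q2 1 + q2 2 * q2 2) * q1 1 * q1 1 + (q1 0 * q1 0 + q1 1 * q1 1 + q1 2 * q1 2) * (q2 0 * q2 0 + q2 1 * q2 1 + q2 2 * q2 2)),
      -(k * ((q1 0 * q2 0 + q1 1 * q2 1 + q1 2 * q2 2) * q2 1 * q1 2 - (q1 0 * q1 0 + q1 1 * q1 1 + q1 2 * q1 2) * q2 1 * q2 2 - (q2 0 * q2 0 + q2 1 * q2 1 + q2 2 * q2 2) * q1 1 * q1 2));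
      -(k * ((q1 0 * q2 0 + q1 1 * q2 1 + q1 2 * q2 2) * q2 2 * q1 0 - (q1 0 * q1 0 + q1 1 * q1 1 + q1 2 * q1 2) * q2 2 * q2 0 - (q2 0 * q2 0 + q2 1 * q2 1 + q2 2 * q2 2) * q1 2 * q1 0)),
      -(k * ((q1 0 * q2 0 + q1 1 * q2 1 + q1 2 * q2 2) * q2 2 * q1 1 - (q1 0 * q1 0 + q1 1 * q1 1 + q1 2 * q1 2) * q2 2 * q2 1 - (q2 0 * q2 0 + q2 1 * q2 1 + q2 2 * q2 2) * q1 2 * q1 1)),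
      d - k * ((q1 0 * q2 0 + q1 1 * q2 1 + q1 2 * q2 2) * q2 2 * q1 2 - (q1 0 * q1 0 + q1 1 * q1 1 + q1 2 * q1 2) * q2 2 * q2 2 - (q2 0 * q2 0 + q2 1 * q2 1 + q2 2 * q2 2) * q1 2 * q1 2 + (q1 0 * q1 0 + q1 1 * q1 1 + q1 2 * q1 2) * (q2 0 * q2 0 + q2 1 * q2 1 + q2 2 * q2 2))] := by
    ext i j
    fin_cases i <;> fin_cases j <;>
      · simp only [hat, Matrix.sub_apply, Matrix.smul_apply, Matrix.mul_apply,
          Fin.sum_univ_three, Matrix.one_apply, smul_eq_mul, Matrix.cons_val',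
          Matrix.cons_val_zero, Matrix.cons_val_one, Matrix.head_cons, Matrix.empty_val',
          Matrix.cons_val_fin_one, Matrix.head_fin_const, Matrix.cons_val_two, Matrix.tail_cons, Matrix.cons_val]
        norm_num [Fin.ext_iff]
        simp only [Matrix.cons_val]
        try ring
        try tauto
  rw [key, det3]
  simp only [dotProduct, Fin.sum_univ_three]
  ring

theorem stmt10 (M : Matrix (Fin 2) (Fin 2) ℝ) (hM : M.PosDef)
    (q1 q2 : Fin 3 → ℝ) (h1 : q1 ⬝ᵥ q1 = 1) (h2 : q2 ⬝ᵥ q2 = 1) :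
    IsUnit (Matrix.fromBlocks (M 0 0 • (1 : Matrix (Fin 3) (Fin 3) ℝ))
      (-(M 0 1) • (hat q1 * hat q1)) (-(M 0 1) • (hat q2 * hat q2))
      (M 1 1 • (1 : Matrix (Fin 3) (Fin 3) ℝ))) := by
  have ha : 0 < M 0 0 := hM.diag_pos
  have hd : 0 < M 1 1 := hM.diag_pos
  have hsym : M 1 0 = M 0 1 := by
    have := hM.1
    have := congrFun (congrFun this 0) 1
    simpa [Matrix.conjTranspose_apply] using this
  have hdet : M 0 1 ^ 2 < M 0 0 * M 1 1 := by
    have := hM.det_pos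
    rw [Matrix.det_fin_two, hsym] at this
    nlinarith
  -- Cauchy-Schwarz
  have hcs : (q1 ⬝ᵥ q2) ^ 2 ≤ 1 := by
    have h1' := h1
    have h2' := h2
    simp only [dotProduct, Fin.sum_univ_three] at h1' h2' ⊢
    nlinarith [sq_nonneg (q1 0 * q2 1 - q1 1 * q2 0), sq_nonneg (q1 0 * q2 2 - q1 2 * q2 0),
      sq_nonneg (q1 1 * q2 2 - q1 2 * q2 1)]
  set a := M 0 0
  set d := M 1 1
  set m := M 0 1
  haveI : Invertible (a • (1 : Matrix (Fin 3) (Fin 3) ℝ)) :=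
    ⟨a⁻¹ • (1 : Matrix (Fin 3) (Fin 3) ℝ),
      by rw [smul_mul_smul_comm, inv_mul_cancel₀ ha.ne', one_smul, one_mul],
      by rw [smul_mul_smul_comm, mul_inv_cancel₀ ha.ne', one_smul, one_mul]⟩
  rw [Matrix.isUnit_iff_isUnit_det, Matrix.det_fromBlocks₁₁]
  have hinv : ⅟(a • (1 : Matrix (Fin 3) (Fin 3) ℝ)) = a⁻¹ • (1 : Matrix (Fin 3) (Fin 3) ℝ) := by
    apply invOf_eq_right_inv
    rw [smul_mul_smul_comm, mul_inv_cancel₀ ha.ne', one_smul, one_mul]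
  rw [hinv]
  have hC : (-m • (hat q2 * hat q2)) * (a⁻¹ • (1 : Matrix (Fin 3) (Fin 3) ℝ)) *
      (-m • (hat q1 * hat q1)) = (m ^ 2 * a⁻¹) • (hat q2 * hat q2 * (hat q1 * hat q1)) := by
    simp only [Matrix.smul_mul, Matrix.mul_smul, Matrix.mul_one, smul_smul]
    ring_nf
  rw [hC, detQQ, h1, h2, Matrix.det_smul, Matrix.det_one]
  have hk : 0 ≤ m ^ 2 * a⁻¹ := by positivity
  have hkd : m ^ 2 * a⁻¹ < d := by
    nlinarith [mul_lt_mul_of_pos_right hdet (inv_pos.mpr ha), mul_inv_cancel₀ ha.ne']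
  have h3 : 0 < d - m ^ 2 * a⁻¹ * (q1 ⬝ᵥ q2) ^ 2 := by nlinarith [sq_nonneg (q1 ⬝ᵥ q2)]
  have h4 : 0 < d - m ^ 2 * a⁻¹ * (1 * 1) := by nlinarith
  refine isUnit_iff_ne_zero.mpr (ne_of_gt ?_)
  simp only [Fintype.card_fin, mul_one]
  nlinarith [mul_pos (pow_pos ha 3) (mul_pos (mul_pos hd h3) h4)]
end

section
/- For unit vectors q₁, q₂ ∈ ℝ³ and a symmetric positive definite 2×2 matrix M, det [[M₁₁ I₃, −M₁₂ q̂₁ q̂₂],[−M₁₂ q̂₂ q̂₁, M₂₂ I₃]] = det [[M₁₁ I₃, −M₁₂ q̂₁ q̂₁],[−M₁₂ q̂₂ q̂₂, M₂₂ I₃]], i.e. the two 6×6 block matrices appearing in the position and angular-velocity forms of the Euler–Lagrange equations have equal determinants. -/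
open Matrix
set_option maxHeartbeats 1000000

/-- For `d ≠ 0`, `det (d•1 - c•(P*Q)) = det (d•1 - c•(P'*Q'))` whenever `Q*P = Q'*P'`. -/
lemma det_smul_one_sub_eq {d c : ℝ} (hd : d ≠ 0) (P Q P' Q' : Matrix (Fin 3) (Fin 3) ℝ)
    (h : Q * P = Q' * P') :
    (d • (1 : Matrix (Fin 3) (Fin 3) ℝ) - c • (P * Q)).det =
      (d • (1 : Matrix (Fin 3) (Fin 3) ℝ) - c • (P' * Q')).det := by
  have key : ∀ R S : Matrix (Fin 3) (Fin 3) ℝ,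
      d • (1 : Matrix (Fin 3) (Fin 3) ℝ) - c • (R * S) =
        d • ((1 : Matrix (Fin 3) (Fin 3) ℝ) + ((-c / d) • R) * S) := by
    intro R S
    rw [Matrix.smul_mul, smul_add, smul_smul, mul_div_cancel₀ _ hd, sub_eq_add_neg, neg_smul]
  rw [key, key, Matrix.det_smul, Matrix.det_smul, Matrix.det_one_add_mul_comm,
    Matrix.det_one_add_mul_comm (((-c / d) • P') : Matrix (Fin 3) (Fin 3) ℝ) Q',
    Matrix.mul_smul, Matrix.mul_smul, h]

theorem stmt11 (M : Matrix (Fin 2) (Fin 2) ℝ) (hM : M.PosDef)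
    (q1 q2 : Fin 3 → ℝ) (h1 : q1 ⬝ᵥ q1 = 1) (h2 : q2 ⬝ᵥ q2 = 1) :
    (Matrix.fromBlocks (M 0 0 • (1 : Matrix (Fin 3) (Fin 3) ℝ)) (-(M 0 1) • (hat q1 * hat q2))
        (-(M 0 1) • (hat q2 * hat q1)) (M 1 1 • (1 : Matrix (Fin 3) (Fin 3) ℝ))).det =
      (Matrix.fromBlocks (M 0 0 • (1 : Matrix (Fin 3) (Fin 3) ℝ)) (-(M 0 1) • (hat q1 * hat q1))
        (-(M 0 1) • (hat q2 * hat q2)) (M 1 1 • (1 : Matrix (Fin 3) (Fin 3) ℝ))).det := by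
  have ha : (0:ℝ) < M 0 0 := by
    have hne : (![1, 0] : Fin 2 → ℝ) ≠ 0 := by
      intro h; simpa using congrFun h 0
    have := Matrix.PosDef.dotProduct_mulVec_pos hM hne
    simpa [dotProduct, Matrix.mulVec, Fin.sum_univ_two] using this
  have hd : (0:ℝ) < M 1 1 := by
    have hne : (![0, 1] : Fin 2 → ℝ) ≠ 0 := by
      intro h; simpa using congrFun h 1
    have := Matrix.PosDef.dotProduct_mulVec_pos hM hne
    simpa [dotProduct, Matrix.mulVec, Fin.sum_univ_two] using this
  have ha' : M 0 0 ≠ 0 := ne_of_gt ha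
  have hd' : M 1 1 ≠ 0 := ne_of_gt hd
  haveI : Invertible (M 0 0 • (1 : Matrix (Fin 3) (Fin 3) ℝ)) :=
    ⟨(M 0 0)⁻¹ • (1 : Matrix (Fin 3) (Fin 3) ℝ),
      by rw [Matrix.smul_mul, Matrix.mul_smul, Matrix.mul_one, smul_smul,
        inv_mul_cancel₀ ha', one_smul],
      by rw [Matrix.smul_mul, Matrix.mul_smul, Matrix.mul_one, smul_smul,
        mul_inv_cancel₀ ha', one_smul]⟩
  rw [Matrix.det_fromBlocks₁₁, Matrix.det_fromBlocks₁₁]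
  congr 1
  have hinv : ⅟ (M 0 0 • (1 : Matrix (Fin 3) (Fin 3) ℝ)) = (M 0 0)⁻¹ • 1 := by
    apply invOf_eq_right_inv
    rw [Matrix.smul_mul, Matrix.mul_smul, Matrix.mul_one, smul_smul,
      mul_inv_cancel₀ ha', one_smul]
  rw [hinv]
  have hsimp : ∀ (P Q : Matrix (Fin 3) (Fin 3) ℝ),
      (-(M 0 1) • P) * ((M 0 0)⁻¹ • (1 : Matrix (Fin 3) (Fin 3) ℝ)) * (-(M 0 1) • Q) =
        (M 0 1 * M 0 1 * (M 0 0)⁻¹) • (P * Q) := by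
    intro P Q
    rw [Matrix.mul_smul, Matrix.mul_smul, Matrix.mul_one, Matrix.smul_mul, Matrix.smul_mul,
      smul_smul, smul_smul]
    congr 1
    ring
  rw [hsimp, hsimp]
  rw [Matrix.mul_assoc (hat q2) (hat q1) (hat q1 * hat q2)]
  exact det_smul_one_sub_eq hd' (hat q2) (hat q1 * (hat q1 * hat q2))
    (hat q2 * hat q2) (hat q1 * hat q1) (by simp only [Matrix.mul_assoc])
end

section
/- Let q, f ∈ ℝ³ with ‖q‖ = 1 and f · q = 0, and let F be the Cayley transform of f. Then q × (F q) = (2/(1 + f·f)) f. -/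
open Matrix

/-- The Cayley transform of `f ∈ ℝ³`. -/
noncomputable def cayley (f : Fin 3 → ℝ) : Matrix (Fin 3) (Fin 3) ℝ :=
  (1 + hat f) * (1 - hat f)⁻¹

set_option maxHeartbeats 1000000 in
theorem stmt15 (q f : Fin 3 → ℝ) (hq : q ⬝ᵥ q = 1) (hfq : f ⬝ᵥ q = 0) :
    crossProduct q ((cayley f).mulVec q) = (2 / (1 + f ⬝ᵥ f)) • f := by
  set c : ℝ := 1 + f ⬝ᵥ f with hc
  have hcdot : c = 1 + (f 0 * f 0 + (f 1 * f 1 + f 2 * f 2)) := by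
    simp [hc, dotProduct, Fin.sum_univ_three]; ring
  have hc0 : c ≠ 0 := by
    rw [hcdot]; nlinarith [sq_nonneg (f 0), sq_nonneg (f 1), sq_nonneg (f 2)]
  set N : Matrix (Fin 3) (Fin 3) ℝ :=
    !![(1 + f 0 ^ 2)/c, (f 0 * f 1 - f 2)/c, (f 0 * f 2 + f 1)/c;
       (f 1 * f 0 + f 2)/c, (1 + f 1 ^ 2)/c, (f 1 * f 2 - f 0)/c;
       (f 2 * f 0 - f 1)/c, (f 2 * f 1 + f 0)/c, (1 + f 2 ^ 2)/c] with hN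
  have hmul : (1 - hat f) * N = 1 := by
    ext i j
    fin_cases i <;> fin_cases j <;>
      simp [hN, hat, Matrix.mul_apply, Fin.sum_univ_three, Matrix.one_apply] <;>
      field_simp <;> (try rw [hcdot]) <;> ring
  set s : ℝ := f 0 ^ 2 + f 1 ^ 2 + f 2 ^ 2 with hs
  set M : Matrix (Fin 3) (Fin 3) ℝ :=
    !![(1 - s + 2*f 0^2)/c, (2*f 0*f 1 - 2*f 2)/c, (2*f 0*f 2 + 2*f 1)/c;
       (2*f 1*f 0 + 2*f 2)/c, (1 - s + 2*f 1^2)/c, (2*f 1*f 2 - 2*f 0)/c;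
       (2*f 2*f 0 - 2*f 1)/c, (2*f 2*f 1 + 2*f 0)/c, (1 - s + 2*f 2^2)/c] with hM
  have hcay : cayley f = M := by
    rw [cayley, Matrix.inv_eq_right_inv hmul]
    ext i j
    fin_cases i <;> fin_cases j <;>
      simp [hN, hM, hs, hat, Matrix.mul_apply, Fin.sum_univ_three, Matrix.one_apply] <;>
      field_simp <;> ring
  have hq' : q 0 * q 0 + q 1 * q 1 + q 2 * q 2 = 1 := by
    have := hq; simp [dotProduct, Fin.sum_univ_three] at this; linarith
  have hfq' : f 0 * q 0 + f 1 * q 1 + f 2 * q 2 = 0 := by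
    have := hfq; simp [dotProduct, Fin.sum_univ_three] at this; linarith
  funext i
  fin_cases i
  · simp [hcay, hM, hs, Matrix.mulVec, dotProduct, Fin.sum_univ_three, crossProduct]
    field_simp
    linear_combination (2 * f 0) * hq' + (2 * (f 2 * q 1 - f 1 * q 2) - 2 * q 0) * hfq'
  · simp [hcay, hM, hs, Matrix.mulVec, dotProduct, Fin.sum_univ_three, crossProduct]
    field_simp
    linear_combination (2 * f 1) * hq' + (2 * (f 0 * q 2 - f 2 * q 0) - 2 * q 1) * hfq'
  · simp [hcay, hM, hs, Matrix.mulVec, dotProduct, Fin.sum_univ_three, crossProduct]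
    field_simp
    linear_combination (2 * f 2) * hq' + (2 * (f 1 * q 0 - f 0 * q 1) - 2 * q 2) * hfq'
end

section
/- Let q, f ∈ ℝ³ with ‖q‖ = 1 and f · q = 0, and let F be the Cayley transform of f. Then (F − I) q = −(2/(1 + f·f)) (q fᵀ + q̂) f, where q̂ v = q × v and q fᵀ denotes the outer product matrix. -/
open Matrix

lemma cayley_key (f : Fin 3 → ℝ) :
    (1 - hat f) * (1 + hat f + vecMulVec f f) = (1 + f ⬝ᵥ f) • 1 := by
  ext i j
  fin_cases i <;> fin_cases j <;>
    simp [hat, vecMulVec, Matrix.mul_apply, Fin.sum_univ_three, Matrix.one_apply,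
      dotProduct] <;> ring

theorem stmt16 (q f : Fin 3 → ℝ) (hq : q ⬝ᵥ q = 1) (hfq : f ⬝ᵥ q = 0) :
    (cayley f - 1).mulVec q =
      -((2 / (1 + f ⬝ᵥ f)) • (vecMulVec q f + hat q).mulVec f) := by
  have hd : (0:ℝ) < 1 + f ⬝ᵥ f := by
    have h0 : f ⬝ᵥ f = f 0 * f 0 + f 1 * f 1 + f 2 * f 2 := by
      simp [dotProduct, Fin.sum_univ_three]
    nlinarith [mul_self_nonneg (f 0), mul_self_nonneg (f 1), mul_self_nonneg (f 2)]
  have hinv : (1 - hat f)⁻¹ = (1 / (1 + f ⬝ᵥ f)) • (1 + hat f + vecMulVec f f) := by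
    apply Matrix.inv_eq_right_inv
    rw [Matrix.mul_smul, cayley_key, smul_smul, one_div, inv_mul_cancel₀ hd.ne', one_smul]
  have hfq' : f 0 * q 0 + f 1 * q 1 + f 2 * q 2 = 0 := by
    simpa [dotProduct, Fin.sum_univ_three] using hfq
  rw [cayley, hinv, Matrix.mul_smul]
  ext i
  have h1 : (1:ℝ) + f 0 ^ 2 + f 2 ^ 2 + f 1 ^ 2 ≠ 0 := by positivity
  have hc : ((1:ℝ) + f 0 ^ 2 + f 2 ^ 2 + f 1 ^ 2)⁻¹ * (1 + f 0 ^ 2 + f 2 ^ 2 + f 1 ^ 2) = 1 :=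
    inv_mul_cancel₀ h1
  fin_cases i
  · simp [hat, vecMulVec, Matrix.mul_apply, Matrix.mulVec, Fin.sum_univ_three,
      Matrix.one_apply, dotProduct, vecHead, vecTail]
    linear_combination (2 * f 0 * (1 + f 0 ^ 2 + f 2 ^ 2 + f 1 ^ 2)⁻¹) * hfq' + q 0 * hc
  · simp [hat, vecMulVec, Matrix.mul_apply, Matrix.mulVec, Fin.sum_univ_three,
      Matrix.one_apply, dotProduct, vecHead, vecTail]
    linear_combination (2 * f 1 * (1 + f 0 ^ 2 + f 2 ^ 2 + f 1 ^ 2)⁻¹) * hfq' + q 1 * hc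
  · simp [hat, vecMulVec, Matrix.mul_apply, Matrix.mulVec, Fin.sum_univ_three,
      Matrix.one_apply, dotProduct, vecHead, vecTail]
    linear_combination (2 * f 2 * (1 + f 0 ^ 2 + f 2 ^ 2 + f 1 ^ 2)⁻¹) * hfq' + q 2 * hc
end
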